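/- arXiv:1405.5194 — 3 statements merged into one kernel-verified Lean document; each statement's English description precedes it below -/
import Mathlib

section
/- Let X be a connected simplicial complex and let X1, X2, X3 be pairwise intersecting geodesically convex subcomplexes. Then there exist vertices A ∈ X1 ∩ X2, B ∈ X1 ∩ X3, C ∈ X2 ∩ X3 and geodesics γ1 ⊆ X1 from A to B, γ2 ⊆ X2 from A to C, γ3 ⊆ X3 from B to C such that either γ1 ∩ γ2 ∩ γ3 is nonempty, or the concatenation γ1 * γ3 * γ2 is an embedded cycle (isomorphic to a triangulation of S^1). -/
open Finset

noncomputable section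
open scoped Classical

/-- An abstract simplicial complex on vertex type `V`, given by its set of
(nonempty, finite) faces, closed under passing to nonempty subsets. -/
structure SComplex (V : Type) [DecidableEq V] where
  faces : Set (Finset V)
  not_empty_mem : ∅ ∉ faces
  down_closed : ∀ s ∈ faces, ∀ t ⊆ s, t.Nonempty → t ∈ faces

namespace SComplex

variable {V : Type} [DecidableEq V] (K : SComplex V)

/-- The 1-skeleton of a simplicial complex, as a simple graph. -/
def graph : SimpleGraph V where
  Adj a b := a ≠ b ∧ ({a, b} : Finset V) ∈ K.faces
  symm := by
    constructor
    intro a b h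
    refine ⟨h.1.symm, ?_⟩
    rw [Finset.pair_comm]
    exact h.2
  loopless := by
    constructor
    intro a h
    exact h.1 rfl

/-- A flag complex: every finite set of pairwise adjacent vertices spans a simplex. -/
def Flag : Prop :=
  ∀ s : Finset V, s.Nonempty → (∀ a ∈ s, ∀ b ∈ s, a ≠ b → K.graph.Adj a b) → s ∈ K.faces

/-- An embedded cycle of length `n` in the 1-skeleton, given by an injective map
from `ZMod n` with consecutive vertices adjacent. -/
def IsCycle (n : ℕ) (f : ZMod n → V) : Prop :=
  Function.Injective f ∧ ∀ i : ZMod n, K.graph.Adj (f i) (f (i + 1))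

/-- The cycle `f` has a diagonal: an edge joining two nonconsecutive vertices. -/
def HasDiagonal (n : ℕ) (f : ZMod n → V) : Prop :=
  ∃ i j : ZMod n, j ≠ i ∧ j ≠ i + 1 ∧ j ≠ i - 1 ∧ K.graph.Adj (f i) (f j)

/-- `k`-largeness: flag, and every embedded cycle of length `3 < n < k` has a diagonal. -/
def Large (k : ℕ) : Prop :=
  K.Flag ∧ ∀ n : ℕ, 3 < n → n < k → ∀ f : ZMod n → V, K.IsCycle n f → K.HasDiagonal n f

/-- The link of a simplex `σ`. -/
def link (σ : Finset V) : SComplex V where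
  faces := {t | t.Nonempty ∧ Disjoint t σ ∧ t ∪ σ ∈ K.faces}
  not_empty_mem := by
    rintro ⟨h, -, -⟩
    simp at h
  down_closed := by
    rintro s ⟨-, hd, hu⟩ t hts htne
    refine ⟨htne, hd.mono_left ?_, K.down_closed _ hu _ (Finset.union_subset_union hts Finset.Subset.rfl) ?_⟩
    · exact Finset.le_iff_subset.2 hts
    · obtain ⟨x, hx⟩ := htne
      exact ⟨x, Finset.mem_union_left _ hx⟩

/-- Local `k`-largeness: the link of every simplex is `k`-large. -/
def LocallyLarge (k : ℕ) : Prop :=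
  ∀ σ ∈ K.faces, (K.link σ).Large k

/-- A (full) geodesically convex subcomplex, specified by its vertex set:
it contains every geodesic of the 1-skeleton between any two of its vertices. -/
def ConvexSub (A : Set V) : Prop :=
  (∀ v ∈ A, ({v} : Finset V) ∈ K.faces) ∧
  ∀ x ∈ A, ∀ y ∈ A, ∀ p : K.graph.Walk x y, p.length = K.graph.dist x y →
    ∀ v ∈ p.support, v ∈ A

/-- A `3`-convex subcomplex: full (each vertex is a vertex of `K`), and containing the
middle vertex of every geodesic of length 2 with both endpoints in it. -/
def ThreeConvex (A : Set V) : Prop :=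
  (∀ v ∈ A, ({v} : Finset V) ∈ K.faces) ∧
  ∀ x ∈ A, ∀ z ∈ A, ∀ u : V, K.graph.Adj x u → K.graph.Adj u z →
    K.graph.dist x z = 2 → u ∈ A

end SComplex

/-- A combinatorial 2-dimensional surface-like complex: a finite set of triangles
(3-element vertex sets), every edge lying in at most two triangles. -/
structure CombSurface (W : Type) [DecidableEq W] where
  triangles : Finset (Finset W)
  card_eq : ∀ t ∈ triangles, t.card = 3
  edge_le_two : ∀ e : Finset W, e.card = 2 → (triangles.filter fun t => e ⊆ t).card ≤ 2

namespace CombSurface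

variable {W : Type} [DecidableEq W] (D : CombSurface W)

/-- Vertices of the surface. -/
def verts : Finset W := D.triangles.biUnion id

/-- Edges of the surface (2-element subsets of triangles). -/
def edges : Finset (Finset W) := D.triangles.biUnion fun t => Finset.powersetCard 2 t

/-- 1-skeleton of the surface. -/
def graph : SimpleGraph W where
  Adj a b := a ≠ b ∧ ∃ t ∈ D.triangles, a ∈ t ∧ b ∈ t
  symm := by
    constructor
    rintro a b ⟨h1, t, ht, ha, hb⟩
    exact ⟨h1.symm, t, ht, hb, ha⟩
  loopless := by
    constructor
    rintro a ⟨h, -⟩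
    exact h rfl

/-- The number of triangles containing a vertex. -/
def numTri (v : W) : ℕ := (D.triangles.filter fun t => v ∈ t).card

/-- A boundary edge: an edge contained in exactly one triangle. -/
def BoundaryEdge (e : Finset W) : Prop :=
  e.card = 2 ∧ (D.triangles.filter fun t => e ⊆ t).card = 1

/-- A boundary vertex: a vertex lying on a boundary edge. -/
def IsBoundary (v : W) : Prop := ∃ e : Finset W, D.BoundaryEdge e ∧ v ∈ e

/-- The defect of a vertex: `3 - numTri` for boundary vertices, `6 - numTri` for
interior vertices. -/
def defect (v : W) : ℤ :=
  (if D.IsBoundary v then 3 else 6) - (D.numTri v : ℤ)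

/-- Euler characteristic `V - E + F`. -/
def euler : ℤ := (D.verts.card : ℤ) - (D.edges.card : ℤ) + (D.triangles.card : ℤ)

/-- The link graph at a vertex `v`: two vertices are adjacent iff they span a
triangle together with `v`. -/
def linkGraph (v : W) : SimpleGraph W where
  Adj a b := a ≠ b ∧ ({v, a, b} : Finset W) ∈ D.triangles
  symm := by
    constructor
    rintro a b ⟨h1, h2⟩
    refine ⟨h1.symm, ?_⟩
    rwa [Finset.pair_comm]
  loopless := by
    constructor
    rintro a ⟨h, -⟩
    exact h rfl

/-- The manifold condition: the link of every vertex is connected (together with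
`edge_le_two` this makes every vertex link a path or a cycle). -/
def IsManifold : Prop :=
  ∀ v a b : W, D.graph.Adj v a → D.graph.Adj v b → (D.linkGraph v).Reachable a b

/-- The 1-skeleton is connected on the vertices of the surface. -/
def Conn : Prop := ∀ a ∈ D.verts, ∀ b ∈ D.verts, D.graph.Reachable a b

/-- A combinatorial disc: a connected combinatorial surface with Euler
characteristic 1 and nonempty boundary. -/
def IsDisc : Prop :=
  D.IsManifold ∧ D.Conn ∧ D.euler = 1 ∧ ∃ e : Finset W, D.BoundaryEdge e

/-- An enumeration of the boundary of the surface as a cycle. -/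
def BCycle (n : ℕ) (g : ZMod n → W) : Prop :=
  Function.Injective g ∧ (∀ i : ZMod n, D.BoundaryEdge {g i, g (i + 1)}) ∧
    ∀ v ∈ D.verts, D.IsBoundary v → ∃ i : ZMod n, g i = v

end CombSurface

/-- The area of a simplicial map on a surface: the number of triangles on which
it is injective. -/
def areaOf {W : Type} [DecidableEq W] {V : Type} [DecidableEq V]
    (D : CombSurface W) (φ : W → V) : ℕ :=
  (D.triangles.filter fun t => (t.image φ).card = 3).card

namespace SComplex

variable {V : Type} [DecidableEq V] (K : SComplex V)

/-- A simplicial map from a combinatorial surface to the complex. -/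
def IsSurfaceMap {W : Type} [DecidableEq W] (D : CombSurface W) (φ : W → V) : Prop :=
  ∀ t ∈ D.triangles, t.image φ ∈ K.faces

/-- The surface `(D, φ)` spans the cycle `f`: it is a simplicial map from a disc
whose boundary is mapped isomorphically onto `f`. -/
def Spans {W : Type} [DecidableEq W] (D : CombSurface W) (φ : W → V)
    {n : ℕ} (f : ZMod n → V) : Prop :=
  K.IsSurfaceMap D φ ∧ D.IsDisc ∧ ∃ g : ZMod n → W, D.BCycle n g ∧ ∀ i, φ (g i) = f i

/-- `(D, φ)` is a minimal surface spanning the cycle `f`. -/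
def MinSpans (D : CombSurface ℕ) (φ : ℕ → V) {n : ℕ} (f : ZMod n → V) : Prop :=
  K.Spans D φ f ∧
    ∀ (D' : CombSurface ℕ) (φ' : ℕ → V), K.Spans D' φ' f → areaOf D φ ≤ areaOf D' φ'

/-- Simple connectivity: every embedded cycle is spanned by a disc surface. -/
def SimplyConnected : Prop :=
  ∀ n : ℕ, 3 ≤ n → ∀ f : ZMod n → V, K.IsCycle n f →
    ∃ (D : CombSurface ℕ) (φ : ℕ → V), K.Spans D φ f

/-- `k`-systolic: connected, simply connected and locally `k`-large. -/
def Systolic (k : ℕ) : Prop :=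
  K.graph.Connected ∧ K.SimplyConnected ∧ K.LocallyLarge k

end SComplex

/-- The equilateral triangulation of the Euclidean plane: the triangular lattice
on `ℤ × ℤ` (1-skeleton). -/
def TriLattice : SimpleGraph (ℤ × ℤ) where
  Adj p q := p ≠ q ∧
    (p.1 - q.1) ^ 2 + (p.1 - q.1) * (p.2 - q.2) + (p.2 - q.2) ^ 2 = 1
  symm := by
    constructor
    rintro p q ⟨h1, h2⟩
    refine ⟨h1.symm, ?_⟩
    ring_nf
    ring_nf at h2
    linarith
  loopless := by
    constructor
    rintro p ⟨h, -⟩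
    exact h rfl


private lemma exists_geodesic_path {V : Type} [DecidableEq V] {G : SimpleGraph V} (hconn : G.Connected)
    (x y : V) : ∃ p : G.Walk x y, p.IsPath ∧ p.length = G.dist x y := by
  obtain ⟨p, hp⟩ := hconn.exists_walk_length_eq_dist x y
  exact ⟨p.bypass, p.bypass_isPath,
    le_antisymm (hp ▸ p.length_bypass_le) (SimpleGraph.dist_le _)⟩

private lemma dist_add_of_mem_geodesic {V : Type} [DecidableEq V] {G : SimpleGraph V} (hconn : G.Connected)
    {x y v : V} (p : G.Walk x y) (hlen : p.length = G.dist x y) (hv : v ∈ p.support) :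
    G.dist x v + G.dist v y = G.dist x y := by
  have h1 : G.dist x v ≤ (p.takeUntil v hv).length := SimpleGraph.dist_le _
  have h2 : G.dist v y ≤ (p.dropUntil v hv).length := SimpleGraph.dist_le _
  have h3 : (p.takeUntil v hv).length + (p.dropUntil v hv).length = p.length := by
    rw [← SimpleGraph.Walk.length_append, p.take_spec hv]
  have h4 := hconn.dist_triangle (u := x) (v := v) (w := y)
  omega


/-- in a connected complex with three pairwise intersecting
geodesically convex subcomplexes one can choose points in the pairwise
intersections and geodesics between them inside the respective subcomplexes so
that either all three geodesics share a vertex or their concatenation is an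
embedded cycle. -/
theorem stmt6_choose_geodesic_triangle {V : Type} [DecidableEq V] (K : SComplex V)
    (hconn : K.graph.Connected) (A1 A2 A3 : Set V)
    (h1 : K.ConvexSub A1) (h2 : K.ConvexSub A2) (h3 : K.ConvexSub A3)
    (h12 : (A1 ∩ A2).Nonempty) (h13 : (A1 ∩ A3).Nonempty) (h23 : (A2 ∩ A3).Nonempty) :
    ∃ (A B C : V), A ∈ A1 ∩ A2 ∧ B ∈ A1 ∩ A3 ∧ C ∈ A2 ∩ A3 ∧
      ∃ (γ1 : K.graph.Walk A B) (γ3 : K.graph.Walk B C) (γ2 : K.graph.Walk A C),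
        γ1.length = K.graph.dist A B ∧ γ3.length = K.graph.dist B C ∧
        γ2.length = K.graph.dist A C ∧
        (∀ v ∈ γ1.support, v ∈ A1) ∧ (∀ v ∈ γ2.support, v ∈ A2) ∧
        (∀ v ∈ γ3.support, v ∈ A3) ∧
        ((∃ v : V, v ∈ γ1.support ∧ v ∈ γ2.support ∧ v ∈ γ3.support) ∨
          ((γ1.append γ3).append γ2.reverse).IsCycle) := by
  classical
  set T : Set ℕ := {n | ∃ a b c : V, a ∈ A1 ∩ A2 ∧ b ∈ A1 ∩ A3 ∧ c ∈ A2 ∩ A3 ∧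
    n = K.graph.dist a b + K.graph.dist a c + K.graph.dist b c} with hT
  have hTne : T.Nonempty := by
    obtain ⟨a, ha⟩ := h12; obtain ⟨b, hb⟩ := h13; obtain ⟨c, hc⟩ := h23
    exact ⟨_, a, b, c, ha, hb, hc, rfl⟩
  obtain ⟨A, B, C, hA, hB, hC, hmeq⟩ := Nat.sInf_mem hTne
  have key : ∀ a b c : V, a ∈ A1 ∩ A2 → b ∈ A1 ∩ A3 → c ∈ A2 ∩ A3 →
      sInf T ≤ K.graph.dist a b + K.graph.dist a c + K.graph.dist b c := fun a b c ha hb hc =>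
    Nat.sInf_le ⟨a, b, c, ha, hb, hc, rfl⟩
  obtain ⟨γ1, hγ1p, hγ1len⟩ := exists_geodesic_path hconn A B
  obtain ⟨γ2, hγ2p, hγ2len⟩ := exists_geodesic_path hconn A C
  obtain ⟨γ3, hγ3p, hγ3len⟩ := exists_geodesic_path hconn B C
  have hs1 : ∀ v ∈ γ1.support, v ∈ A1 := fun v hv =>
    h1.2 A hA.1 B hB.1 γ1 hγ1len v hv
  have hs2 : ∀ v ∈ γ2.support, v ∈ A2 := fun v hv =>
    h2.2 A hA.2 C hC.1 γ2 hγ2len v hv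
  have hs3 : ∀ v ∈ γ3.support, v ∈ A3 := fun v hv =>
    h3.2 B hB.2 C hC.2 γ3 hγ3len v hv
  have claim12 : ∀ v, v ∈ γ1.support → v ∈ γ2.support → v = A := by
    intro v hv1 hv2
    have d1 := dist_add_of_mem_geodesic hconn γ1 hγ1len hv1
    have d2 := dist_add_of_mem_geodesic hconn γ2 hγ2len hv2
    have hk := key v B C ⟨hs1 v hv1, hs2 v hv2⟩ hB hC
    have hcomm : K.graph.dist v B = K.graph.dist B v := SimpleGraph.dist_comm ..
    have hcomm2 : K.graph.dist v C = K.graph.dist C v := SimpleGraph.dist_comm ..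
    have h0 : K.graph.dist A v = 0 := by omega
    exact (hconn.dist_eq_zero_iff.mp h0).symm
  have claim13 : ∀ v, v ∈ γ1.support → v ∈ γ3.support → v = B := by
    intro v hv1 hv3
    have d1 := dist_add_of_mem_geodesic hconn γ1 hγ1len hv1
    have d3 := dist_add_of_mem_geodesic hconn γ3 hγ3len hv3
    have hk := key A v C hA ⟨hs1 v hv1, hs3 v hv3⟩ hC
    have hcomm : K.graph.dist v B = K.graph.dist B v := SimpleGraph.dist_comm ..
    have h0 : K.graph.dist v B = 0 := by omega
    exact hconn.dist_eq_zero_iff.mp h0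
  have claim23 : ∀ v, v ∈ γ2.support → v ∈ γ3.support → v = C := by
    intro v hv2 hv3
    have d2 := dist_add_of_mem_geodesic hconn γ2 hγ2len hv2
    have d3 := dist_add_of_mem_geodesic hconn γ3 hγ3len hv3
    have hk := key A B v hA hB ⟨hs2 v hv2, hs3 v hv3⟩
    have hcomm : K.graph.dist v C = K.graph.dist C v := SimpleGraph.dist_comm ..
    have hcomm2 : K.graph.dist B v = K.graph.dist v B := SimpleGraph.dist_comm ..
    have h0 : K.graph.dist v C = 0 := by omega
    exact hconn.dist_eq_zero_iff.mp h0
  refine ⟨A, B, C, hA, hB, hC, γ1, γ3, γ2, hγ1len, hγ3len, hγ2len, hs1, hs2, hs3, ?_⟩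
  by_cases hcom : ∃ v : V, v ∈ γ1.support ∧ v ∈ γ2.support ∧ v ∈ γ3.support
  · exact Or.inl hcom
  right
  have hAB : A ≠ B := by
    intro h
    exact hcom ⟨A, γ1.start_mem_support, γ2.start_mem_support, h ▸ γ3.start_mem_support⟩
  -- path facts
  have t1 : γ1.support.tail.Nodup ∧ A ∉ γ1.support.tail := by
    have := hγ1p.support_nodup
    rw [γ1.support_eq_cons, List.nodup_cons] at this
    exact ⟨this.2, this.1⟩
  have t3 : γ3.support.tail.Nodup ∧ B ∉ γ3.support.tail := by
    have := hγ3p.support_nodup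
    rw [γ3.support_eq_cons, List.nodup_cons] at this
    exact ⟨this.2, this.1⟩
  have t2 : γ2.reverse.support.tail.Nodup ∧ C ∉ γ2.reverse.support.tail := by
    have := hγ2p.reverse.support_nodup
    rw [γ2.reverse.support_eq_cons, List.nodup_cons] at this
    exact ⟨this.2, this.1⟩
  have mem2 : ∀ v ∈ γ2.reverse.support.tail, v ∈ γ2.support := by
    intro v hv
    have : v ∈ γ2.reverse.support := List.mem_of_mem_tail hv
    rwa [SimpleGraph.Walk.support_reverse, List.mem_reverse] at this
  constructor
  constructor
  · -- IsTrail : edges nodup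
    constructor
    rw [SimpleGraph.Walk.edges_append, SimpleGraph.Walk.edges_append, List.nodup_append',
      List.nodup_append']
    have en1 := hγ1p.isTrail.edges_nodup
    have en3 := hγ3p.isTrail.edges_nodup
    have en2 := hγ2p.reverse.isTrail.edges_nodup
    have mem2e : ∀ e ∈ γ2.reverse.edges, e ∈ γ2.edges := by
      intro e he
      rwa [SimpleGraph.Walk.edges_reverse, List.mem_reverse] at he
    refine ⟨⟨en1, en3, ?_⟩, en2, ?_⟩
    · intro e he1 he3
      induction e using Sym2.ind with
      | _ x y =>
        have hne : x ≠ y := ((SimpleGraph.mem_edgeSet K.graph).mp (γ1.edges_subset_edgeSet he1)).ne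
        have hx := claim13 x (γ1.fst_mem_support_of_mem_edges he1)
          (γ3.fst_mem_support_of_mem_edges he3)
        have hy := claim13 y (γ1.snd_mem_support_of_mem_edges he1)
          (γ3.snd_mem_support_of_mem_edges he3)
        exact hne (hx.trans hy.symm)
    · intro e he13 he2
      rw [List.mem_append] at he13
      have he2' := mem2e e he2
      induction e using Sym2.ind with
      | _ x y =>
        have hne : x ≠ y := ((SimpleGraph.mem_edgeSet K.graph).mp (γ2.edges_subset_edgeSet he2')).ne
        rcases he13 with he1 | he3
        · have hx := claim12 x (γ1.fst_mem_support_of_mem_edges he1)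
            (γ2.fst_mem_support_of_mem_edges he2')
          have hy := claim12 y (γ1.snd_mem_support_of_mem_edges he1)
            (γ2.snd_mem_support_of_mem_edges he2')
          exact hne (hx.trans hy.symm)
        · have hx := claim23 x (γ2.fst_mem_support_of_mem_edges he2')
            (γ3.fst_mem_support_of_mem_edges he3)
          have hy := claim23 y (γ2.snd_mem_support_of_mem_edges he2')
            (γ3.snd_mem_support_of_mem_edges he3)
          exact hne (hx.trans hy.symm)
  · -- ne nil
    intro h
    have := congrArg SimpleGraph.Walk.length h
    simp only [SimpleGraph.Walk.length_append, SimpleGraph.Walk.length_nil,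
      SimpleGraph.Walk.length_reverse] at this
    have h10 : γ1.length = 0 := by omega
    rw [hγ1len] at h10
    exact hAB (hconn.dist_eq_zero_iff.mp h10)
  · -- support tail nodup
    rw [SimpleGraph.Walk.tail_support_append, SimpleGraph.Walk.tail_support_append,
      List.nodup_append', List.nodup_append']
    refine ⟨⟨t1.1, t3.1, ?_⟩, t2.1, ?_⟩
    · intro v hv1 hv3
      have := claim13 v (List.mem_of_mem_tail hv1) (List.mem_of_mem_tail hv3)
      exact t3.2 (this ▸ hv3)
    · intro v hv13 hv2
      rw [List.mem_append] at hv13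
      have hv2' := mem2 v hv2
      rcases hv13 with hv1 | hv3
      · have := claim12 v (List.mem_of_mem_tail hv1) hv2'
        exact t1.2 (this ▸ hv1)
      · have := claim23 v hv2' (List.mem_of_mem_tail hv3)
        exact t2.2 (this ▸ hv2)


end
end

section
/- Let Δ be a simplicial disc whose boundary consists of two geodesics (of its 1-skeleton) between vertices x and y meeting only at x and y, and suppose every interior vertex of Δ has defect ≤ 0. Then on each of the two boundary geodesics, between any two vertices of positive defect there is a vertex of negative defect; consequently the total defect along each open boundary geodesic (excluding x and y) is at most 1. -/
open Finset

noncomputable section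
open scoped Classical

section DefectHelpers

open SimpleGraph

variable {W : Type} [DecidableEq W]

private lemma exists_walk_getVert {G H : SimpleGraph W}
    (hHG : ∀ a b : W, H.Adj a b → G.Adj a b) {u v : W} (q : H.Walk u v) :
    ∀ b a : ℕ, a ≤ b → ∃ w : G.Walk (q.getVert a) (q.getVert b), w.length ≤ b - a := by
  intro b
  induction b with
  | zero =>
    intro a ha
    obtain rfl : a = 0 := Nat.le_zero.mp ha
    exact ⟨Walk.nil, by simp⟩
  | succ b ih =>
    intro a ha
    rcases Nat.lt_or_ge a (b + 1) with h | h
    · obtain ⟨w, hw⟩ := ih a (by omega)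
      rcases Nat.lt_or_ge b q.length with hb | hb
      · exact ⟨w.concat (hHG _ _ (q.adj_getVert_succ hb)), by
          rw [Walk.length_concat]; omega⟩
      · have he : q.getVert (b + 1) = q.getVert b := by
          rw [q.getVert_of_length_le hb, q.getVert_of_length_le (by omega)]
        rw [he]
        exact ⟨w, by omega⟩
    · obtain rfl : a = b + 1 := by omega
      exact ⟨Walk.nil, by simp⟩

private lemma geo_dist {G : SimpleGraph W} {x y : W} (p : G.Walk x y)
    (hg : p.length = G.dist x y) {a b : ℕ} (hab : a ≤ b) (hb : b ≤ p.length) :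
    G.dist (p.getVert a) (p.getVert b) = b - a := by
  have hid : ∀ a b : W, G.Adj a b → G.Adj a b := fun _ _ h => h
  obtain ⟨wab, hwab⟩ := exists_walk_getVert hid p b a hab
  refine le_antisymm (le_trans (SimpleGraph.dist_le wab) hwab) ?_
  obtain ⟨w1, hw1⟩ := exists_walk_getVert hid p a 0 (Nat.zero_le a)
  obtain ⟨w2, hw2⟩ := exists_walk_getVert hid p p.length b hb
  have hreach : G.Reachable (p.getVert a) (p.getVert b) := ⟨wab⟩
  obtain ⟨wd, hwd⟩ := hreach.exists_walk_length_eq_dist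
  have hbig := SimpleGraph.dist_le ((w1.copy p.getVert_zero rfl).append
      (wd.append (w2.copy rfl p.getVert_length)))
  rw [← hg] at hbig
  simp only [Walk.length_append, Walk.length_copy] at hbig
  omega

namespace CombSurface

variable (D : CombSurface W)

private lemma pair_card_two {a b : W} (h : ({a, b} : Finset W).card = 2) : a ≠ b := by
  rintro rfl
  simp at h

private lemma tri_of_bedge {e : Finset W} (h : D.BoundaryEdge e) :
    ∃ t ∈ D.triangles, e ⊆ t := by
  obtain ⟨t, ht⟩ := Finset.card_eq_one.mp h.2
  have : t ∈ D.triangles.filter fun t => e ⊆ t := by rw [ht]; simp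
  rw [Finset.mem_filter] at this
  exact ⟨t, this.1, this.2⟩

private lemma bedge_unique {e : Finset W} (h : D.BoundaryEdge e)
    {t1 t2 : Finset W} (ht1 : t1 ∈ D.triangles) (he1 : e ⊆ t1)
    (ht2 : t2 ∈ D.triangles) (he2 : e ⊆ t2) : t1 = t2 := by
  obtain ⟨t, ht⟩ := Finset.card_eq_one.mp h.2
  have h1 : t1 ∈ D.triangles.filter fun t => e ⊆ t := by simp [Finset.mem_filter, ht1, he1]
  have h2 : t2 ∈ D.triangles.filter fun t => e ⊆ t := by simp [Finset.mem_filter, ht2, he2]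
  rw [ht, Finset.mem_singleton] at h1 h2
  rw [h1, h2]

private lemma linkAdj_facts {v a b : W} (h : (D.linkGraph v).Adj a b) :
    a ≠ v ∧ b ≠ v ∧ a ≠ b ∧ ({v, a, b} : Finset W) ∈ D.triangles := by
  obtain ⟨hab, htri⟩ := h
  have h3 := D.card_eq _ htri
  have hcard2 : ∀ u w : W, ({u, w} : Finset W).card ≤ 2 := fun u w =>
    le_trans (Finset.card_insert_le _ _) (by simp)
  refine ⟨?_, ?_, hab, htri⟩
  · intro hEq
    rw [hEq, Finset.insert_idem] at h3
    have := hcard2 v b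
    omega
  · intro hEq
    have he : ({v, a, b} : Finset W) = {v, a} := by
      rw [hEq]; ext u; simp; tauto
    rw [he] at h3
    have := hcard2 v a
    omega

private lemma linkAdj_graphAdj {v a b : W} (h : (D.linkGraph v).Adj a b) :
    D.graph.Adj a b := by
  obtain ⟨-, -, hab, htri⟩ := D.linkAdj_facts h
  exact ⟨hab, {v, a, b}, htri, by simp, by simp⟩

/-- The central lemma about links: if `{a,v}` and `{v,c}` are boundary edges,
`a` and `c` are at distance 2, and `za, zc` are link-neighbours of `a, c` in the
link of `v`, then `za` and `zc` are joined by a short walk. -/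
private lemma link_step (hman : D.IsManifold)
    {a v c za zc : W}
    (hav : D.BoundaryEdge {a, v}) (hvc : D.BoundaryEdge {v, c})
    (hd2 : D.graph.dist a c = 2)
    (hza : (D.linkGraph v).Adj a za) (hzc : (D.linkGraph v).Adj c zc) :
    ∃ w : D.graph.Walk za zc, w.length ≤ D.numTri v - 2 := by
  classical
  set L := D.linkGraph v with hL
  have hLG : ∀ α β : W, L.Adj α β → D.graph.Adj α β := fun α β h => D.linkAdj_graphAdj h
  obtain ⟨hzane, hzav, hzaa, hzatri⟩ := D.linkAdj_facts hza
  obtain ⟨hzcne, hzcv, hzcc, hzctri⟩ := D.linkAdj_facts hzc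
  have hav' : a ≠ v := pair_card_two hav.1
  have hvc' : v ≠ c := pair_card_two hvc.1
  have hac : a ≠ c := by
    rintro rfl
    rw [SimpleGraph.dist_self] at hd2
    omega
  -- unique link-neighbours
  have ua : ∀ w' : W, L.Adj a w' → w' = za := by
    intro w' hw'
    obtain ⟨hw1, hw2, hw3, hw4⟩ := D.linkAdj_facts hw'
    have hsub1 : ({a, v} : Finset W) ⊆ {v, a, w'} := by intro u; simp; tauto
    have hsub2 : ({a, v} : Finset W) ⊆ {v, a, za} := by intro u; simp; tauto
    have heq := D.bedge_unique hav hw4 hsub1 hzatri hsub2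
    have : w' ∈ ({v, a, za} : Finset W) := by rw [← heq]; simp
    simp at this
    rcases this with h | h | h
    · exact absurd h hw2
    · exact absurd h.symm hw3
    · exact h
  have uc : ∀ w' : W, L.Adj c w' → w' = zc := by
    intro w' hw'
    obtain ⟨hw1, hw2, hw3, hw4⟩ := D.linkAdj_facts hw'
    have hsub1 : ({v, c} : Finset W) ⊆ {v, c, w'} := by intro u; simp; tauto
    have hsub2 : ({v, c} : Finset W) ⊆ {v, c, zc} := by intro u; simp; tauto
    have heq := D.bedge_unique hvc hw4 hsub1 hzctri hsub2
    have : w' ∈ ({v, c, zc} : Finset W) := by rw [← heq]; simp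
    simp at this
    rcases this with h | h | h
    · exact absurd h hw2
    · exact absurd h.symm hw3
    · exact h
  -- a path from a to c in the link of v
  have hadjva : D.graph.Adj v a := ⟨hav'.symm, {v, a, za}, hzatri, by simp, by simp⟩
  have hadjvc : D.graph.Adj v c := ⟨hvc', {v, c, zc}, hzctri, by simp, by simp⟩
  obtain ⟨w0⟩ := hman v a c hadjva hadjvc
  set q : L.Walk a c := (w0.toPath : L.Path a c).1 with hq
  have hp : q.IsPath := (w0.toPath : L.Path a c).2
  set len := q.length with hlen
  have hlen0 : len ≠ 0 := by
    intro h
    exact hac (Walk.eq_of_length_eq_zero h)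
  have hlen1 : len ≠ 1 := by
    intro h
    have hadj : L.Adj (q.getVert 0) (q.getVert 1) := q.adj_getVert_succ (by omega)
    rw [q.getVert_zero] at hadj
    rw [show (1 : ℕ) = len from h.symm, q.getVert_length] at hadj
    have : D.graph.Adj a c := hLG _ _ hadj
    have := SimpleGraph.dist_le (Walk.cons this Walk.nil)
    simp at this
    omega
  have hlen2 : 2 ≤ len := by omega
  -- the second and second-to-last vertices of q
  have h1 : q.getVert 1 = za := by
    apply ua
    have := q.adj_getVert_succ (show 0 < len by omega)
    rwa [q.getVert_zero] at this
  have h2 : q.getVert (len - 1) = zc := by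
    apply uc
    have := q.adj_getVert_succ (show len - 1 < len by omega)
    rw [show len - 1 + 1 = len by omega, q.getVert_length] at this
    exact this.symm
  -- counting: len ≤ numTri v
  have hcount : len ≤ D.numTri v := by
    set F : Sym2 W → Finset W := Sym2.lift ⟨fun α β => insert v {α, β}, by
      intro α β
      ext u; simp; tauto⟩ with hF
    have hFs : ∀ α β : W, F s(α, β) = insert v {α, β} := fun α β => rfl
    have hmem : ∀ e ∈ q.edges, F e ∈ D.triangles.filter fun t => v ∈ t := by
      intro e he
      induction e with
      | h α β =>
        have hadj := q.adj_of_mem_edges he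
        obtain ⟨-, -, -, htri⟩ := D.linkAdj_facts hadj
        rw [hFs]
        simp only [Finset.mem_filter]
        exact ⟨htri, by simp⟩
    have hinj : ∀ e1 ∈ q.edges, ∀ e2 ∈ q.edges, F e1 = F e2 → e1 = e2 := by
      intro e1 he1 e2 he2
      induction e1 with
      | h α β =>
        induction e2 with
        | h γ δ =>
          intro hFe
          rw [hFs, hFs] at hFe
          obtain ⟨hα, hβ, hαβ, -⟩ := D.linkAdj_facts (q.adj_of_mem_edges he1)
          obtain ⟨hγ, hδ, hγδ, -⟩ := D.linkAdj_facts (q.adj_of_mem_edges he2)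
          have hvαβ : v ∉ ({α, β} : Finset W) := by simp [Ne.symm hα, Ne.symm hβ]
          have hvγδ : v ∉ ({γ, δ} : Finset W) := by simp [Ne.symm hγ, Ne.symm hδ]
          have hpairs : ({α, β} : Finset W) = {γ, δ} := by
            have := congrArg (fun s => Finset.erase s v) hFe
            simpa [Finset.erase_insert hvαβ, Finset.erase_insert hvγδ] using this
          have hαm : α = γ ∨ α = δ := by
            have : α ∈ ({γ, δ} : Finset W) := by rw [← hpairs]; simp
            simpa using this
          have hβm : β = γ ∨ β = δ := by
            have : β ∈ ({γ, δ} : Finset W) := by rw [← hpairs]; simp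
            simpa using this
          have hδm : δ = α ∨ δ = β := by
            have : δ ∈ ({α, β} : Finset W) := by rw [hpairs]; simp
            simpa using this
          rw [Sym2.eq_iff]
          rcases hαm with rfl | rfl
          · rcases hβm with rfl | rfl
            · exact absurd rfl hαβ
            · exact Or.inl ⟨rfl, rfl⟩
          · rcases hβm with rfl | rfl
            · exact Or.inr ⟨rfl, rfl⟩
            · exact absurd rfl hαβ
    have hnd : (q.edges.map F).Nodup := hp.isTrail.edges_nodup.map_on hinj
    have hsub : (q.edges.map F).toFinset ⊆ D.triangles.filter fun t => v ∈ t := by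
      intro t ht
      rw [List.mem_toFinset, List.mem_map] at ht
      obtain ⟨e, he, rfl⟩ := ht
      exact hmem e he
    have hcard := Finset.card_le_card hsub
    rw [List.toFinset_card_of_nodup hnd, List.length_map, Walk.length_edges] at hcard
    exact hcard
  -- conclude
  obtain ⟨w, hw⟩ := exists_walk_getVert hLG q (len - 1) 1 (by omega)
  rw [← h1, ← h2]
  refine ⟨w, le_trans hw ?_⟩
  clear_value len
  omega

private lemma numTri_two_le {x y : W} (p : D.graph.Walk x y)
    (hg : p.length = D.graph.dist x y)
    (hb : ∀ i < p.length, D.BoundaryEdge {p.getVert i, p.getVert (i + 1)})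
    {k : ℕ} (hk0 : 0 < k) (hk : k < p.length) : 2 ≤ D.numTri (p.getVert k) := by
  have hkm : k - 1 + 1 = k := by omega
  have hd2 : D.graph.dist (p.getVert (k - 1)) (p.getVert (k + 1)) = 2 := by
    have := geo_dist p hg (show k - 1 ≤ k + 1 by omega) (show k + 1 ≤ p.length by omega)
    rwa [show k + 1 - (k - 1) = 2 by omega] at this
  obtain ⟨t1, ht1, he1⟩ := D.tri_of_bedge (hb (k - 1) (by omega))
  obtain ⟨t2, ht2, he2⟩ := D.tri_of_bedge (hb k hk)
  rw [hkm] at he1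
  have ht1k : p.getVert k ∈ t1 := he1 (by simp)
  have ht2k : p.getVert k ∈ t2 := he2 (by simp)
  have hne : t1 ≠ t2 := by
    rintro rfl
    have hm1 : p.getVert (k - 1) ∈ t1 := he1 (by simp)
    have hm2 : p.getVert (k + 1) ∈ t1 := he2 (by simp)
    have hnev : p.getVert (k - 1) ≠ p.getVert (k + 1) := by
      intro h
      rw [h, SimpleGraph.dist_self] at hd2
      omega
    have hadj : D.graph.Adj (p.getVert (k - 1)) (p.getVert (k + 1)) :=
      ⟨hnev, t1, ht1, hm1, hm2⟩
    have := SimpleGraph.dist_le (Walk.cons hadj Walk.nil)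
    simp at this
    omega
  have : 1 < (D.triangles.filter fun t => p.getVert k ∈ t).card := by
    rw [Finset.one_lt_card]
    exact ⟨t1, by simp [Finset.mem_filter, ht1, ht1k],
           t2, by simp [Finset.mem_filter, ht2, ht2k], hne⟩
  exact this

private lemma isBoundary_getVert {x y : W} (p : D.graph.Walk x y)
    (hb : ∀ i < p.length, D.BoundaryEdge {p.getVert i, p.getVert (i + 1)})
    {k : ℕ} (hk : k < p.length) : D.IsBoundary (p.getVert k) :=
  ⟨{p.getVert k, p.getVert (k + 1)}, hb k hk, by simp⟩

private lemma defect_getVert {x y : W} (p : D.graph.Walk x y)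
    (hb : ∀ i < p.length, D.BoundaryEdge {p.getVert i, p.getVert (i + 1)})
    {k : ℕ} (hk : k < p.length) :
    D.defect (p.getVert k) = 3 - (D.numTri (p.getVert k) : ℤ) := by
  rw [defect, if_pos (D.isBoundary_getVert p hb hk)]

private lemma defect_le_one {x y : W} (p : D.graph.Walk x y)
    (hg : p.length = D.graph.dist x y)
    (hb : ∀ i < p.length, D.BoundaryEdge {p.getVert i, p.getVert (i + 1)})
    {k : ℕ} (hk0 : 0 < k) (hk : k < p.length) : D.defect (p.getVert k) ≤ 1 := by
  rw [D.defect_getVert p hb hk]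
  have := D.numTri_two_le p hg hb hk0 hk
  omega

/-- Existence of the apex of a boundary edge of the walk. -/
private lemma apex_exists {x y : W} (p : D.graph.Walk x y)
    (hb : ∀ i < p.length, D.BoundaryEdge {p.getVert i, p.getVert (i + 1)}) :
    ∀ k : ℕ, ∃ z : W, k < p.length →
      (D.linkGraph (p.getVert k)).Adj (p.getVert (k + 1)) z ∧
      (D.linkGraph (p.getVert (k + 1))).Adj (p.getVert k) z ∧
      D.graph.Adj (p.getVert k) z ∧ D.graph.Adj (p.getVert (k + 1)) z := by
  intro k
  by_cases hk : k < p.length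
  · obtain ⟨t, ht, he⟩ := D.tri_of_bedge (hb k hk)
    have hcard3 := D.card_eq t ht
    have hpair : ({p.getVert k, p.getVert (k + 1)} : Finset W).card = 2 := (hb k hk).1
    have hne : p.getVert k ≠ p.getVert (k + 1) := pair_card_two hpair
    have hns : (t \ {p.getVert k, p.getVert (k + 1)}).Nonempty := by
      rw [← Finset.card_pos, Finset.card_sdiff_of_subset he, hcard3, hpair]
      omega
    obtain ⟨z, hz⟩ := hns
    rw [Finset.mem_sdiff] at hz
    obtain ⟨hzt, hznot⟩ := hz
    have hz1 : z ≠ p.getVert k := by intro h; apply hznot; simp [h]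
    have hz2 : z ≠ p.getVert (k + 1) := by intro h; apply hznot; simp [h]
    have hteq : t = {p.getVert k, p.getVert (k + 1), z} := by
      apply (Finset.eq_of_subset_of_card_le _ _).symm
      · intro u hu
        simp at hu
        rcases hu with rfl | rfl | rfl
        · exact he (by simp)
        · exact he (by simp)
        · exact hzt
      · rw [hcard3]
        rw [Finset.card_insert_of_notMem (by simp [hne, Ne.symm hz1]),
          Finset.card_insert_of_notMem (by simp [Ne.symm hz2])]
        simp
    refine ⟨z, fun _ => ⟨⟨Ne.symm hz2, ?_⟩, ⟨Ne.symm hz1, ?_⟩, ⟨Ne.symm hz1, t, ht, he (by simp), hzt⟩,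
      ⟨Ne.symm hz2, t, ht, he (by simp), hzt⟩⟩⟩
    · rw [← hteq]; exact ht
    · have : ({p.getVert (k + 1), p.getVert k, z} : Finset W)
          = {p.getVert k, p.getVert (k + 1), z} := by ext u; simp; tauto
      rw [this, ← hteq]; exact ht
  · exact ⟨x, fun h => absurd h hk⟩

/-- The key alternation lemma: between two positive-defect vertices strictly inside
the geodesic there is a negative-defect vertex. -/
private lemma key_alt (hman : D.IsManifold) {x y : W}
    (p : D.graph.Walk x y) (hg : p.length = D.graph.dist x y)
    (hb : ∀ i < p.length, D.BoundaryEdge {p.getVert i, p.getVert (i + 1)}) :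
    ∀ i j : ℕ, 0 < i → i < j → j < p.length →
      0 < D.defect (p.getVert i) → 0 < D.defect (p.getVert j) →
      ∃ k : ℕ, i < k ∧ k < j ∧ D.defect (p.getVert k) < 0 := by
  intro i j hi hij hj hdi hdj
  by_contra hcon
  push_neg at hcon
  -- numTri facts
  have hnti : D.numTri (p.getVert i) = 2 := by
    have h1 := D.numTri_two_le p hg hb hi (by omega)
    rw [D.defect_getVert p hb (by omega)] at hdi
    omega
  have hntj : D.numTri (p.getVert j) = 2 := by
    have h1 := D.numTri_two_le p hg hb (by omega) hj
    rw [D.defect_getVert p hb hj] at hdj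
    omega
  have hntmid : ∀ k, i < k → k < j → D.numTri (p.getVert k) ≤ 3 := by
    intro k h1 h2
    have := hcon k h1 h2
    rw [D.defect_getVert p hb (by omega)] at this
    omega
  choose z hzspec using D.apex_exists p hb
  -- the shortcut step
  have hstep : ∀ k, 0 < k → k < p.length →
      ∃ w : D.graph.Walk (z (k - 1)) (z k), w.length ≤ D.numTri (p.getVert k) - 2 := by
    intro k hk0 hk
    have hkm : k - 1 + 1 = k := by omega
    have hav : D.BoundaryEdge {p.getVert (k - 1), p.getVert k} := by
      have := hb (k - 1) (by omega)
      rwa [hkm] at this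
    have hvc : D.BoundaryEdge {p.getVert k, p.getVert (k + 1)} := hb k hk
    have hd2 : D.graph.dist (p.getVert (k - 1)) (p.getVert (k + 1)) = 2 := by
      have := geo_dist p hg (show k - 1 ≤ k + 1 by omega) (show k + 1 ≤ p.length by omega)
      rwa [show k + 1 - (k - 1) = 2 by omega] at this
    have hza : (D.linkGraph (p.getVert k)).Adj (p.getVert (k - 1)) (z (k - 1)) := by
      have := (hzspec (k - 1) (by omega)).2.1
      rwa [hkm] at this
    have hzc : (D.linkGraph (p.getVert k)).Adj (p.getVert (k + 1)) (z k) :=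
      (hzspec k hk).1
    exact D.link_step hman hav hvc hd2 hza hzc
  -- the shortcut chain
  have hchain : ∀ k, i ≤ k → k < j →
      ∃ w : D.graph.Walk (p.getVert (i - 1)) (z k), w.length ≤ 1 + (k - i) := by
    intro k hik
    induction k, hik using Nat.le_induction with
    | base =>
      intro _
      obtain ⟨w0, hw0⟩ := hstep i hi (by omega)
      have hadj : D.graph.Adj (p.getVert (i - 1)) (z (i - 1)) :=
        (hzspec (i - 1) (by omega)).2.2.1
      exact ⟨Walk.cons hadj w0, by rw [Walk.length_cons]; omega⟩
    | succ k hik ih =>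
      intro hk
      obtain ⟨w1, hw1⟩ := ih (by omega)
      obtain ⟨w2, hw2⟩ := hstep (k + 1) (by omega) (by omega)
      have hmid := hntmid (k + 1) (by omega) hk
      exact ⟨w1.append w2, by rw [Walk.length_append]; omega⟩
  obtain ⟨w1, hw1⟩ := hchain (j - 1) (by omega) (by omega)
  obtain ⟨w2, hw2⟩ := hstep j (by omega) hj
  have hadj2 : D.graph.Adj (z j) (p.getVert (j + 1)) := ((hzspec j hj).2.2.2).symm
  have hdle := SimpleGraph.dist_le (((w1.append w2)).concat hadj2)
  have hdeq := geo_dist p hg (show i - 1 ≤ j + 1 by omega) (show j + 1 ≤ p.length by omega)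
  rw [hdeq] at hdle
  rw [Walk.length_concat, Walk.length_append] at hdle
  omega

end CombSurface

/-- The purely arithmetic lemma: if all values are `≤ 1` and between any two
positive values there is a negative one, the total sum is at most 1. -/
private lemma alt_sum_le_one (n : ℕ) (f : ℕ → ℤ)
    (hle : ∀ k, 0 < k → k < n → f k ≤ 1)
    (halt : ∀ i j : ℕ, 0 < i → i < j → j < n → 0 < f i → 0 < f j →
      ∃ k, i < k ∧ k < j ∧ f k < 0) :
    ∑ k ∈ Finset.Ioo 0 n, f k ≤ 1 := by
  have hsplit : ∀ i' j' : ℕ, 0 < i' → i' < j' →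
      ∑ k ∈ Finset.Ioo 0 j', f k
        = ∑ k ∈ Finset.Ioo 0 i', f k + f i' + ∑ k ∈ Finset.Ioo i' j', f k := by
    intro i' j' h0 hij
    have e1 : Finset.Ioo 0 j' = Finset.Ioo 0 i' ∪ Finset.Ico i' j' := by
      ext u; simp [Finset.mem_Ioo, Finset.mem_Ico, Finset.mem_union]; omega
    have hdisj : Disjoint (Finset.Ioo 0 i') (Finset.Ico i' j') := by
      rw [Finset.disjoint_left]
      intro u hu1 hu2
      simp [Finset.mem_Ioo] at hu1
      simp [Finset.mem_Ico] at hu2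
      omega
    rw [e1, Finset.sum_union hdisj, ← Finset.Ioo_insert_left hij,
      Finset.sum_insert (by simp), add_assoc, add_comm (f i'), ← add_assoc]
  have prefixle : ∀ j, 0 < j → j < n → 0 < f j → ∑ k ∈ Finset.Ioo 0 j, f k ≤ 0 := by
    intro j
    induction j using Nat.strong_induction_on with
    | _ j ih =>
      intro hj0 hjn hfj
      by_cases hpos : ∃ i, 0 < i ∧ i < j ∧ 0 < f i
      · obtain ⟨i0, hi0⟩ := hpos
        set s := (Finset.Ioo 0 j).filter (fun k => 0 < f k) with hs
        have hsne : s.Nonempty :=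
          ⟨i0, by simp [hs, Finset.mem_filter, Finset.mem_Ioo]; exact ⟨⟨hi0.1, hi0.2.1⟩, hi0.2.2⟩⟩
        set i' := s.max' hsne with hi'
        have hi'mem := s.max'_mem hsne
        simp only [hs, Finset.mem_filter, Finset.mem_Ioo] at hi'mem
        obtain ⟨⟨hi'0, hi'j⟩, hfi'⟩ := hi'mem
        obtain ⟨m, hm1, hm2, hm3⟩ := halt i' j hi'0 hi'j hjn hfi' hfj
        have hnopos : ∀ k, i' < k → k < j → f k ≤ 0 := by
          intro k hk1 hk2
          by_contra h
          push_neg at h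
          have : k ≤ i' := Finset.le_max' s k
            (by simp [hs, Finset.mem_filter, Finset.mem_Ioo]; exact ⟨⟨by omega, hk2⟩, h⟩)
          omega
        have h1 := ih i' hi'j hi'0 (by omega) hfi'
        have h2 : ∑ k ∈ Finset.Ioo i' j, f k ≤ -1 := by
          have hbnd : ∀ k ∈ Finset.Ioo i' j, f k ≤ if k = m then -1 else 0 := by
            intro k hk
            simp only [Finset.mem_Ioo] at hk
            by_cases h : k = m
            · subst h; simp; omega
            · simp [h]; exact hnopos k hk.1 hk.2
          calc ∑ k ∈ Finset.Ioo i' j, f k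
              ≤ ∑ k ∈ Finset.Ioo i' j, (if k = m then (-1 : ℤ) else 0) :=
                Finset.sum_le_sum hbnd
            _ = -1 := by
                rw [Finset.sum_ite_eq' (Finset.Ioo i' j) m (fun _ => (-1 : ℤ))]
                simp [Finset.mem_Ioo, hm1, hm2]
        have hfi'le := hle i' hi'0 (by omega)
        rw [hsplit i' j hi'0 hi'j]
        omega
      · push_neg at hpos
        apply Finset.sum_nonpos
        intro k hk
        simp only [Finset.mem_Ioo] at hk
        exact le_of_not_gt fun h => by have := hpos k hk.1 hk.2; omega
  by_cases hpos : ∃ i, 0 < i ∧ i < n ∧ 0 < f i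
  · obtain ⟨i0, hi0⟩ := hpos
    set s := (Finset.Ioo 0 n).filter (fun k => 0 < f k) with hs
    have hsne : s.Nonempty :=
      ⟨i0, by simp [hs, Finset.mem_filter, Finset.mem_Ioo]; exact ⟨⟨hi0.1, hi0.2.1⟩, hi0.2.2⟩⟩
    set i' := s.max' hsne with hi'
    have hi'mem := s.max'_mem hsne
    simp only [hs, Finset.mem_filter, Finset.mem_Ioo] at hi'mem
    obtain ⟨⟨hi'0, hi'n⟩, hfi'⟩ := hi'mem
    have hnopos : ∀ k, i' < k → k < n → f k ≤ 0 := by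
      intro k hk1 hk2
      by_contra h
      push_neg at h
      have : k ≤ i' := Finset.le_max' s k
        (by simp [hs, Finset.mem_filter, Finset.mem_Ioo]; exact ⟨⟨by omega, hk2⟩, h⟩)
      omega
    have h1 := prefixle i' hi'0 hi'n hfi'
    have h2 : ∑ k ∈ Finset.Ioo i' n, f k ≤ 0 := by
      apply Finset.sum_nonpos
      intro k hk
      simp only [Finset.mem_Ioo] at hk
      exact hnopos k hk.1 hk.2
    have h3 := hle i' hi'0 hi'n
    rw [hsplit i' n hi'0 hi'n]
    omega
  · push_neg at hpos
    have : ∑ k ∈ Finset.Ioo 0 n, f k ≤ 0 := by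
      apply Finset.sum_nonpos
      intro k hk
      simp only [Finset.mem_Ioo] at hk
      exact le_of_not_gt fun h => by have := hpos k hk.1 hk.2; omega
    omega

end DefectHelpers

/-- on each of the two boundary geodesics of a digon, between any two
positive-defect vertices there is a negative one, and the total defect along each
open geodesic is at most 1. -/
theorem stmt8_digon_boundary_defect {W : Type} [DecidableEq W]
    (D : CombSurface W) (hdisc : D.IsDisc)
    (hsys : ∀ v ∈ D.verts, ¬D.IsBoundary v → D.defect v ≤ 0)
    (x y : W) (hx : x ∈ D.verts) (hy : y ∈ D.verts) (hxy : x ≠ y)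
    (p0 p1 : D.graph.Walk x y)
    (hg0 : p0.length = D.graph.dist x y) (hg1 : p1.length = D.graph.dist x y)
    (hb0 : ∀ i < p0.length, D.BoundaryEdge {p0.getVert i, p0.getVert (i + 1)})
    (hb1 : ∀ i < p1.length, D.BoundaryEdge {p1.getVert i, p1.getVert (i + 1)})
    (hmeet : ∀ v : W, v ∈ p0.support → v ∈ p1.support → v = x ∨ v = y)
    (hcover : ∀ v ∈ D.verts, D.IsBoundary v → v ∈ p0.support ∨ v ∈ p1.support) :
    (∀ i j : ℕ, 0 < i → i < j → j < p0.length →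
        0 < D.defect (p0.getVert i) → 0 < D.defect (p0.getVert j) →
        ∃ k : ℕ, i < k ∧ k < j ∧ D.defect (p0.getVert k) < 0) ∧
    (∀ i j : ℕ, 0 < i → i < j → j < p1.length →
        0 < D.defect (p1.getVert i) → 0 < D.defect (p1.getVert j) →
        ∃ k : ℕ, i < k ∧ k < j ∧ D.defect (p1.getVert k) < 0) ∧
    (∑ i ∈ Finset.Ioo 0 p0.length, D.defect (p0.getVert i)) ≤ 1 ∧
    (∑ i ∈ Finset.Ioo 0 p1.length, D.defect (p1.getVert i)) ≤ 1 := by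
  obtain ⟨hman, -, -, -⟩ := hdisc
  have key0 := D.key_alt hman p0 hg0 hb0
  have key1 := D.key_alt hman p1 hg1 hb1
  refine ⟨key0, key1, ?_, ?_⟩
  · exact alt_sum_le_one p0.length (fun k => D.defect (p0.getVert k))
      (fun k hk0 hk => D.defect_le_one p0 hg0 hb0 hk0 hk) key0
  · exact alt_sum_le_one p1.length (fun k => D.defect (p1.getVert k))
      (fun k hk0 hk => D.defect_le_one p1 hg1 hb1 hk0 hk) key1

end
end

section
/- Let Δ be a simplicial disc all of whose interior vertices have defect ≤ 0 (a systolic disc), whose boundary is a geodesic triangle: three distinguished vertices of defect at most 2 and all other boundary vertices contained in at least 3 triangles (defect ≤ 0). Then Δ has no interior vertices with strictly negative defect, every interior vertex has defect exactly 0, and Δ is flat. -/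
open Finset

noncomputable section
open scoped Classical

/-! ### Auxiliary lemmas for Statement 9: combinatorial Gauss–Bonnet -/

namespace CombSurface

variable {W : Type} [DecidableEq W] (D : CombSurface W)

/-- The number of triangles containing an edge. -/
def triCount (e : Finset W) : ℕ := (D.triangles.filter fun t => e ⊆ t).card

/-- The boundary edges, as a finset. -/
def bedges : Finset (Finset W) := D.edges.filter fun e => D.BoundaryEdge e

lemma mem_verts' {v : W} : v ∈ D.verts ↔ ∃ t ∈ D.triangles, v ∈ t := by
  simp [verts, Finset.mem_biUnion]

lemma mem_edges' {e : Finset W} :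
    e ∈ D.edges ↔ ∃ t ∈ D.triangles, e ⊆ t ∧ e.card = 2 := by
  simp only [edges, Finset.mem_biUnion, Finset.mem_powersetCard]

lemma subset_verts {t : Finset W} (ht : t ∈ D.triangles) : t ⊆ D.verts := by
  intro v hv
  exact D.mem_verts'.2 ⟨t, ht, hv⟩

lemma mem_edges_of_boundary {e : Finset W} (he : D.BoundaryEdge e) : e ∈ D.edges := by
  obtain ⟨hc, h1⟩ := he
  have : (D.triangles.filter fun t => e ⊆ t).Nonempty := by
    rw [← Finset.card_pos, h1]; norm_num
  obtain ⟨t, ht⟩ := this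
  rw [Finset.mem_filter] at ht
  exact D.mem_edges'.2 ⟨t, ht.1, ht.2, hc⟩

lemma sum_numTri : ∑ v ∈ D.verts, D.numTri v = 3 * D.triangles.card := by
  have h : ∀ v ∈ D.verts, D.numTri v = ∑ t ∈ D.triangles, if v ∈ t then 1 else 0 := by
    intro v _
    rw [numTri, Finset.card_filter]
  rw [Finset.sum_congr rfl h, Finset.sum_comm]
  rw [Finset.sum_congr rfl (fun t ht => ?_), Finset.sum_const, smul_eq_mul, mul_comm]
  have : ∑ v ∈ D.verts, (if v ∈ t then 1 else 0) = (D.verts.filter fun v => v ∈ t).card := by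
    rw [Finset.card_filter]
  rw [this]
  have : D.verts.filter (fun v => v ∈ t) = t := by
    ext v
    simp only [Finset.mem_filter]
    exact ⟨fun h => h.2, fun h => ⟨D.subset_verts ht h, h⟩⟩
  rw [this, D.card_eq t ht]

lemma sum_triCount : ∑ e ∈ D.edges, D.triCount e = 3 * D.triangles.card := by
  have h : ∀ e ∈ D.edges, D.triCount e = ∑ t ∈ D.triangles, if e ⊆ t then 1 else 0 := by
    intro e _
    rw [triCount, Finset.card_filter]
  rw [Finset.sum_congr rfl h, Finset.sum_comm]
  rw [Finset.sum_congr rfl (fun t ht => ?_), Finset.sum_const, smul_eq_mul, mul_comm]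
  have h1 : ∑ e ∈ D.edges, (if e ⊆ t then 1 else 0) = (D.edges.filter fun e => e ⊆ t).card := by
    rw [Finset.card_filter]
  rw [h1]
  have h2 : D.edges.filter (fun e => e ⊆ t) = Finset.powersetCard 2 t := by
    ext e
    simp only [Finset.mem_filter, Finset.mem_powersetCard]
    constructor
    · rintro ⟨he, hsub⟩
      obtain ⟨t', _, _, hc⟩ := D.mem_edges'.1 he
      exact ⟨hsub, hc⟩
    · rintro ⟨hsub, hc⟩
      exact ⟨D.mem_edges'.2 ⟨t, ht, hsub, hc⟩, hsub⟩
  rw [h2, Finset.card_powersetCard, D.card_eq t ht]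
  rfl

lemma triCount_pos {e : Finset W} (he : e ∈ D.edges) : 1 ≤ D.triCount e := by
  obtain ⟨t, ht, hsub, _⟩ := D.mem_edges'.1 he
  rw [triCount, Nat.succ_le_iff, Finset.card_pos]
  exact ⟨t, Finset.mem_filter.2 ⟨ht, hsub⟩⟩

lemma triCount_le_two {e : Finset W} (he : e ∈ D.edges) : D.triCount e ≤ 2 := by
  obtain ⟨t, ht, hsub, hc⟩ := D.mem_edges'.1 he
  exact D.edge_le_two e hc

lemma two_mul_card_edges :
    2 * D.edges.card = 3 * D.triangles.card + D.bedges.card := by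
  have key : ∀ e ∈ D.edges, 2 = D.triCount e + (if D.BoundaryEdge e then 1 else 0) := by
    intro e he
    have h1 := D.triCount_pos he
    have h2 := D.triCount_le_two he
    obtain ⟨t, ht, hsub, hc⟩ := D.mem_edges'.1 he
    have hb : D.BoundaryEdge e ↔ D.triCount e = 1 := by
      constructor
      · rintro ⟨-, h⟩; exact h
      · intro h; exact ⟨hc, h⟩
    by_cases hbe : D.BoundaryEdge e
    · rw [if_pos hbe, hb.1 hbe]
    · rw [if_neg hbe]
      have : D.triCount e ≠ 1 := fun h => hbe (hb.2 h)
      omega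
  calc 2 * D.edges.card = ∑ e ∈ D.edges, 2 := by rw [Finset.sum_const, smul_eq_mul, mul_comm]
    _ = ∑ e ∈ D.edges, (D.triCount e + if D.BoundaryEdge e then 1 else 0) :=
        Finset.sum_congr rfl key
    _ = (∑ e ∈ D.edges, D.triCount e) + ∑ e ∈ D.edges, (if D.BoundaryEdge e then 1 else 0) :=
        Finset.sum_add_distrib
    _ = 3 * D.triangles.card + D.bedges.card := by
        rw [D.sum_triCount]
        congr 1
        rw [bedges, ← Finset.card_filter]

lemma sum_bedge_count :
    ∑ v ∈ D.verts, (D.bedges.filter fun e => v ∈ e).card = 2 * D.bedges.card := by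
  have h : ∀ v ∈ D.verts, (D.bedges.filter fun e => v ∈ e).card
      = ∑ e ∈ D.bedges, if v ∈ e then 1 else 0 := by
    intro v _
    rw [Finset.card_filter]
  rw [Finset.sum_congr rfl h, Finset.sum_comm]
  rw [Finset.sum_congr rfl (fun e he => ?_), Finset.sum_const, smul_eq_mul, mul_comm]
  have hbe : D.BoundaryEdge e := (Finset.mem_filter.1 he).2
  have hee : e ∈ D.edges := (Finset.mem_filter.1 he).1
  obtain ⟨t, ht, hsub, hc⟩ := D.mem_edges'.1 hee
  have h1 : ∑ v ∈ D.verts, (if v ∈ e then 1 else 0) = (D.verts.filter fun v => v ∈ e).card := by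
    rw [Finset.card_filter]
  rw [h1]
  have : D.verts.filter (fun v => v ∈ e) = e := by
    ext v
    simp only [Finset.mem_filter]
    exact ⟨fun h => h.2, fun h => ⟨D.subset_verts ht (hsub h), h⟩⟩
  rw [this, hc]

lemma bedge_count (hman : D.IsManifold) {v : W} (hv : v ∈ D.verts) :
    (D.bedges.filter fun e => v ∈ e).card = if D.IsBoundary v then 2 else 0 := by
  set T' := D.triangles.filter (fun t => v ∈ t) with hT'
  set Nv := T'.biUnion (fun t => t.erase v) with hNv
  set m : W → ℕ := fun a => (D.triangles.filter fun t => v ∈ t ∧ a ∈ t).card with hm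
  -- membership in Nv
  have memNv : ∀ a : W, a ∈ Nv ↔ ∃ t ∈ D.triangles, v ∈ t ∧ a ∈ t ∧ a ≠ v := by
    intro a
    simp only [hNv, hT', Finset.mem_biUnion, Finset.mem_filter, Finset.mem_erase]
    constructor
    · rintro ⟨t, ⟨ht, hvt⟩, hne, hat⟩
      exact ⟨t, ht, hvt, hat, hne⟩
    · rintro ⟨t, ht, hvt, hat, hne⟩
      exact ⟨t, ⟨ht, hvt⟩, hne, hat⟩
  -- m a equals the triangle count of the edge {v, a}
  have m_eq : ∀ a : W, a ≠ v → m a = D.triCount {v, a} := by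
    intro a hav
    show (D.triangles.filter fun t => v ∈ t ∧ a ∈ t).card = _
    rw [triCount]
    congr 1
    apply Finset.filter_congr
    intro t _
    simp [Finset.insert_subset_iff]
  have m_bounds : ∀ a ∈ Nv, 1 ≤ m a ∧ m a ≤ 2 := by
    intro a ha
    obtain ⟨t, ht, hvt, hat, hne⟩ := (memNv a).1 ha
    constructor
    · rw [Nat.succ_le_iff, Finset.card_pos]
      exact ⟨t, Finset.mem_filter.2 ⟨ht, hvt, hat⟩⟩
    · rw [m_eq a hne]
      apply D.edge_le_two
      rw [Finset.card_insert_of_notMem (by simp [hne.symm] : v ∉ ({a} : Finset W)),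
        Finset.card_singleton]
  -- sum of m over Nv
  have sum_m : ∑ a ∈ Nv, m a = 2 * D.numTri v := by
    have h : ∀ a ∈ Nv, m a = ∑ t ∈ D.triangles, if v ∈ t ∧ a ∈ t then 1 else 0 := by
      intro a _
      show (D.triangles.filter fun t => v ∈ t ∧ a ∈ t).card = _
      rw [Finset.card_filter]
    rw [Finset.sum_congr rfl h, Finset.sum_comm]
    have h2 : ∀ t ∈ D.triangles,
        (∑ a ∈ Nv, if v ∈ t ∧ a ∈ t then 1 else 0) = if v ∈ t then 2 else 0 := by
      intro t ht
      by_cases hvt : v ∈ t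
      · rw [if_pos hvt]
        have : ∑ a ∈ Nv, (if v ∈ t ∧ a ∈ t then 1 else 0)
            = (Nv.filter fun a => v ∈ t ∧ a ∈ t).card := by rw [Finset.card_filter]
        rw [this]
        have hfe : Nv.filter (fun a => v ∈ t ∧ a ∈ t) = t.erase v := by
          ext a
          simp only [Finset.mem_filter, Finset.mem_erase]
          constructor
          · rintro ⟨haNv, -, hat⟩
            exact ⟨((memNv a).1 haNv).choose_spec.2.2.2, hat⟩
          · rintro ⟨hne, hat⟩
            exact ⟨(memNv a).2 ⟨t, ht, hvt, hat, hne⟩, hvt, hat⟩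
        rw [hfe, Finset.card_erase_of_mem hvt, D.card_eq t ht]
      · rw [if_neg hvt]
        apply Finset.sum_eq_zero
        intro a _
        simp [hvt]
    rw [Finset.sum_congr rfl h2]
    rw [numTri, Finset.card_filter, Finset.mul_sum]
    apply Finset.sum_congr rfl
    intro t _
    by_cases hvt : v ∈ t <;> simp [hvt]
  -- the link edge set
  set Le := T'.image (fun t => t.erase v) with hLe
  have card_Le : Le.card = D.numTri v := by
    have hinj : Set.InjOn (fun t => t.erase v) (T' : Set (Finset W)) := by
      intro t ht t' ht' heq
      rw [Finset.mem_coe, hT', Finset.mem_filter] at ht ht'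
      simp only at heq
      rw [← Finset.insert_erase ht.2, ← Finset.insert_erase ht'.2, heq]
    rw [hLe, Finset.card_image_of_injOn hinj, hT']
    rfl
  -- adjacency in the link graph gives a link edge
  have adj_mem : ∀ a b : W, (D.linkGraph v).Adj a b →
      ({a, b} : Finset W) ∈ Le ∧ a ∈ Nv ∧ b ∈ Nv := by
    intro a b ⟨hab, htri⟩
    set t : Finset W := {v, a, b} with htdef
    have hct : t.card = 3 := D.card_eq t htri
    have hva : a ≠ v := by
      intro h
      have h2 : t ⊆ {v, b} := by
        rw [htdef, h]
        intro x hx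
        simp only [Finset.mem_insert, Finset.mem_singleton] at hx ⊢
        tauto
      have h4 := Finset.card_le_card h2
      have h3 : ({v, b} : Finset W).card ≤ 2 := (Finset.card_insert_le _ _).trans (by simp)
      omega
    have hvb : b ≠ v := by
      intro h
      have h2 : t ⊆ {v, a} := by
        rw [htdef, h]
        intro x hx
        simp only [Finset.mem_insert, Finset.mem_singleton] at hx ⊢
        tauto
      have h4 := Finset.card_le_card h2
      have h3 : ({v, a} : Finset W).card ≤ 2 := (Finset.card_insert_le _ _).trans (by simp)
      omega
    have hvt : v ∈ t := by simp [htdef]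
    have hat : a ∈ t := by simp [htdef]
    have hbt : b ∈ t := by simp [htdef]
    have herase : ({a, b} : Finset W) = t.erase v := by
      apply Finset.eq_of_subset_of_card_le
      · intro x hx
        rw [Finset.mem_insert, Finset.mem_singleton] at hx
        rcases hx with rfl | rfl
        · exact Finset.mem_erase.2 ⟨hva, hat⟩
        · exact Finset.mem_erase.2 ⟨hvb, hbt⟩
      · rw [Finset.card_erase_of_mem hvt, hct,
          Finset.card_insert_of_notMem (by simp [hab]), Finset.card_singleton]
    refine ⟨?_, (memNv a).2 ⟨t, htri, hvt, hat, hva⟩, (memNv b).2 ⟨t, htri, hvt, hbt, hvb⟩⟩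
    rw [herase, hLe]
    exact Finset.mem_image_of_mem _ (Finset.mem_filter.2 ⟨htri, hvt⟩)
  -- reachability in the link graph
  have reach : ∀ a ∈ Nv, ∀ b ∈ Nv, (D.linkGraph v).Reachable a b := by
    intro a ha b hb
    obtain ⟨t, ht, hvt, hat, hav⟩ := (memNv a).1 ha
    obtain ⟨t', ht', hvt', hbt', hbv⟩ := (memNv b).1 hb
    exact hman v a b ⟨Ne.symm hav, t, ht, hvt, hat⟩ ⟨Ne.symm hbv, t', ht', hvt', hbt'⟩
  -- Nv is nonempty
  have hNv_ne : Nv.Nonempty := by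
    obtain ⟨t, ht, hvt⟩ := D.mem_verts'.1 hv
    have : (t.erase v).Nonempty := by
      rw [← Finset.card_pos, Finset.card_erase_of_mem hvt, D.card_eq t ht]
      norm_num
    obtain ⟨a, ha⟩ := this
    rw [Finset.mem_erase] at ha
    exact ⟨a, (memNv a).2 ⟨t, ht, hvt, ha.2, ha.1⟩⟩
  -- connectivity bound: |Nv| ≤ numTri v + 1
  have card_Nv : Nv.card ≤ D.numTri v + 1 := by
    obtain ⟨a0, ha0⟩ := hNv_ne
    set G := D.linkGraph v with hG
    have key : ∀ b ∈ Nv.erase a0, ∃ c, G.Adj b c ∧ G.dist a0 c < G.dist a0 b := by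
      intro b hb
      rw [Finset.mem_erase] at hb
      have hr : G.Reachable b a0 := reach b hb.2 a0 ha0
      have hd0 : G.dist b a0 ≠ 0 := fun h0 => hb.1 (hr.dist_eq_zero_iff.1 h0)
      obtain ⟨p, hp⟩ := hr.exists_walk_length_eq_dist
      cases p with
      | nil => rw [SimpleGraph.Walk.length_nil] at hp; exact absurd hp.symm hd0
      | @cons _ c _ h q =>
        refine ⟨c, h, ?_⟩
        have h1 : G.dist a0 c ≤ q.length := by
          rw [SimpleGraph.dist_comm]
          exact SimpleGraph.dist_le q
        have h2 : G.dist a0 b = q.length + 1 := by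
          rw [SimpleGraph.dist_comm, ← hp, SimpleGraph.Walk.length_cons]
        omega
    set pred : W → W := fun b => if hb : b ∈ Nv.erase a0 then (key b hb).choose else b
      with hpreddef
    have hpred : ∀ b ∈ Nv.erase a0, G.Adj b (pred b) ∧ G.dist a0 (pred b) < G.dist a0 b := by
      intro b hb
      rw [hpreddef]
      simp only [dif_pos hb]
      exact (key b hb).choose_spec
    have hmap : ∀ b ∈ Nv.erase a0, ({b, pred b} : Finset W) ∈ Le := by
      intro b hb
      exact (adj_mem b (pred b) (hpred b hb).1).1
    have hinj : Set.InjOn (fun b => ({b, pred b} : Finset W)) (Nv.erase a0) := by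
      intro b hb b' hb' heq
      by_contra hne
      have h1 := hpred b hb
      have h2 := hpred b' hb'
      simp only at heq
      have hb1 : b ∈ ({b', pred b'} : Finset W) := by
        rw [← heq]; exact Finset.mem_insert_self _ _
      have hb2 : b' ∈ ({b, pred b} : Finset W) := by
        rw [heq]; exact Finset.mem_insert_self _ _
      rw [Finset.mem_insert, Finset.mem_singleton] at hb1 hb2
      rcases hb1 with rfl | hb1
      · exact hne rfl
      rcases hb2 with h | hb2
      · exact hne h.symm
      rw [← hb1] at h2
      rw [← hb2] at h1
      omega
    have := Finset.card_le_card_of_injOn _ hmap hinj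
    rw [Finset.card_erase_of_mem ha0, card_Le] at this
    have hpos : 0 < Nv.card := Finset.card_pos.2 ⟨a0, ha0⟩
    omega
  -- the boundary-edge count at v equals the number of a ∈ Nv with m a = 1
  have count_eq : (Nv.filter fun a => m a = 1).card
      = (D.bedges.filter fun e => v ∈ e).card := by
    apply Finset.card_bij (fun a _ => ({v, a} : Finset W))
    · intro a ha
      rw [Finset.mem_filter] at ha
      obtain ⟨haNv, hma⟩ := ha
      obtain ⟨t, ht, hvt, hat, hav⟩ := (memNv a).1 haNv
      have hcard : ({v, a} : Finset W).card = 2 := by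
        rw [Finset.card_insert_of_notMem (by simp [hav.symm]), Finset.card_singleton]
      have hmem : ({v, a} : Finset W) ∈ D.edges := by
        apply D.mem_edges'.2
        exact ⟨t, ht, by rw [Finset.insert_subset_iff]; exact ⟨hvt, by simpa⟩, hcard⟩
      rw [bedges, Finset.mem_filter, Finset.mem_filter]
      refine ⟨⟨hmem, hcard, ?_⟩, Finset.mem_insert_self _ _⟩
      rw [← triCount, ← m_eq a hav]
      exact hma
    · intro a ha a' ha' heq
      rw [Finset.mem_filter] at ha ha'
      obtain ⟨t, ht, hvt, hat, hav⟩ := (memNv a).1 ha.1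
      obtain ⟨t', ht', hvt', hat', hav'⟩ := (memNv a').1 ha'.1
      have : a ∈ ({v, a'} : Finset W) := by rw [← heq]; simp
      rw [Finset.mem_insert, Finset.mem_singleton] at this
      rcases this with h | h
      · exact absurd h hav
      · exact h
    · intro e he
      rw [Finset.mem_filter, bedges, Finset.mem_filter] at he
      obtain ⟨⟨hee, hbe⟩, hve⟩ := he
      obtain ⟨hc2, hc1⟩ := hbe
      have h1 : (e.erase v).card = 1 := by
        rw [Finset.card_erase_of_mem hve, hc2]
      obtain ⟨a, ha⟩ := Finset.card_eq_one.1 h1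
      have hav : a ≠ v ∧ a ∈ e := by
        have : a ∈ e.erase v := by rw [ha]; simp
        exact Finset.mem_erase.1 this
      have hev : e = {v, a} := by
        rw [← Finset.insert_erase hve, ha]
      obtain ⟨t, ht, hsub, -⟩ := D.mem_edges'.1 hee
      have haNv : a ∈ Nv :=
        (memNv a).2 ⟨t, ht, hsub (hev ▸ Finset.mem_insert_self _ _),
          hsub hav.2, hav.1⟩
      refine ⟨a, Finset.mem_filter.2 ⟨haNv, ?_⟩, hev.symm⟩
      rw [m_eq a hav.1, ← hev]
      exact hc1
  -- now conclude
  have sum_split : 2 * D.numTri v + (Nv.filter fun a => m a = 1).card = 2 * Nv.card := by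
    have : ∀ a ∈ Nv, m a + (if m a = 1 then 1 else 0) = 2 := by
      intro a ha
      obtain ⟨h1, h2⟩ := m_bounds a ha
      by_cases h : m a = 1 <;> simp [h] <;> omega
    calc 2 * D.numTri v + (Nv.filter fun a => m a = 1).card
        = (∑ a ∈ Nv, m a) + ∑ a ∈ Nv, (if m a = 1 then 1 else 0) := by
          rw [sum_m, Finset.card_filter]
      _ = ∑ a ∈ Nv, (m a + if m a = 1 then 1 else 0) := Finset.sum_add_distrib.symm
      _ = ∑ a ∈ Nv, 2 := Finset.sum_congr rfl this
      _ = 2 * Nv.card := by rw [Finset.sum_const, smul_eq_mul, mul_comm]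
  by_cases hvb : D.IsBoundary v
  · rw [if_pos hvb]
    obtain ⟨e, hbe, hve⟩ := hvb
    have : e ∈ D.bedges.filter fun e => v ∈ e := by
      rw [Finset.mem_filter, bedges, Finset.mem_filter]
      exact ⟨⟨D.mem_edges_of_boundary hbe, hbe⟩, hve⟩
    have hge1 : 1 ≤ (D.bedges.filter fun e => v ∈ e).card :=
      Finset.card_pos.2 ⟨e, this⟩
    omega
  · rw [if_neg hvb]
    rw [Finset.card_eq_zero]
    rw [Finset.filter_eq_empty_iff]
    intro e he
    intro hve
    rw [bedges, Finset.mem_filter] at he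
    exact hvb ⟨e, he.2, hve⟩

/-- Combinatorial Gauss–Bonnet for discs: the total defect is `6`. -/
lemma total_defect (hdisc : D.IsDisc) : ∑ v ∈ D.verts, D.defect v = 6 := by
  obtain ⟨hman, -, heuler, -⟩ := hdisc
  -- number of boundary vertices = number of boundary edges
  set Vbd := (D.verts.filter fun v => D.IsBoundary v).card with hVbddef
  have hVbd : Vbd = D.bedges.card := by
    have h1 := D.sum_bedge_count
    have h2 : ∀ v ∈ D.verts, (D.bedges.filter fun e => v ∈ e).card
        = if D.IsBoundary v then 2 else 0 := fun v hv => D.bedge_count hman hv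
    rw [Finset.sum_congr rfl h2, ← Finset.sum_filter, Finset.sum_const, smul_eq_mul] at h1
    rw [hVbddef]
    omega
  have h3 := D.two_mul_card_edges
  have heuler' : (D.verts.card : ℤ) - (D.edges.card : ℤ) + (D.triangles.card : ℤ) = 1 :=
    heuler
  have hsum3 : ∑ v ∈ D.verts, D.numTri v = 3 * D.triangles.card := D.sum_numTri
  have hsplit : ∑ v ∈ D.verts, D.defect v
      = (∑ v ∈ D.verts, (if D.IsBoundary v then (3 : ℤ) else 6))
        - ∑ v ∈ D.verts, (D.numTri v : ℤ) := by
    rw [← Finset.sum_sub_distrib]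
    rfl
  set k := (D.verts.filter fun v => ¬ D.IsBoundary v).card with hkdef
  have hk : Vbd + k = D.verts.card := by
    rw [hVbddef, hkdef]
    exact Finset.card_filter_add_card_filter_not (p := fun v => D.IsBoundary v)
  have hite : ∑ v ∈ D.verts, (if D.IsBoundary v then (3 : ℤ) else 6)
      = 3 * (Vbd : ℤ) + 6 * (k : ℤ) := by
    rw [Finset.sum_ite, Finset.sum_const, Finset.sum_const, nsmul_eq_mul, nsmul_eq_mul]
    push_cast
    ring
  have hcast : ∑ v ∈ D.verts, (D.numTri v : ℤ) = 3 * (D.triangles.card : ℤ) := by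
    rw [← Nat.cast_sum, hsum3]
    push_cast
    ring
  rw [hsplit, hite, hcast]
  have h3' : 2 * (D.edges.card : ℤ) = 3 * (D.triangles.card : ℤ) + (D.bedges.card : ℤ) := by
    exact_mod_cast h3
  have hVbd' : (Vbd : ℤ) = (D.bedges.card : ℤ) := by exact_mod_cast hVbd
  have hk' : (Vbd : ℤ) + (k : ℤ) = (D.verts.card : ℤ) := by exact_mod_cast hk
  linarith

end CombSurface

/-- a systolic disc whose boundary is a geodesic triangle (three
distinguished vertices of defect at most 2, all other boundary vertices in at
least 3 triangles) has all interior defects equal to 0 and is flat. -/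
theorem stmt9_triangle_disc_flat {W : Type} [DecidableEq W]
    (D : CombSurface W) (hdisc : D.IsDisc)
    (hsys : ∀ v ∈ D.verts, ¬D.IsBoundary v → D.defect v ≤ 0)
    (A B C : W) (hA : A ∈ D.verts) (hB : B ∈ D.verts) (hC : C ∈ D.verts)
    (hAB : A ≠ B) (hAC : A ≠ C) (hBC : B ≠ C)
    (hAbd : D.IsBoundary A) (hBbd : D.IsBoundary B) (hCbd : D.IsBoundary C)
    (hdA : D.defect A ≤ 2) (hdB : D.defect B ≤ 2) (hdC : D.defect C ≤ 2)
    (hbd : ∀ v ∈ D.verts, D.IsBoundary v → v ≠ A → v ≠ B → v ≠ C → 3 ≤ D.numTri v) :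
    (∀ v ∈ D.verts, ¬D.IsBoundary v → D.defect v = 0) ∧
    (∀ v ∈ D.verts, D.IsBoundary v → -1 ≤ D.defect v) ∧
    (∀ (n : ℕ) (g : ZMod n → W), D.BCycle n g →
      ∀ (i : ZMod n) (m : ℕ), 0 < m → m < n →
        D.defect (g i) < 0 → D.defect (g (i + (m : ZMod n))) < 0 →
        ∃ k : ℕ, 0 < k ∧ k < m ∧ 0 < D.defect (g (i + (k : ZMod n)))) := by
  classical
  have GB := D.total_defect hdisc
  set S3 : Finset W := {A, B, C} with hS3
  have hS3sub : S3 ⊆ D.verts := by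
    intro x hx
    rw [hS3, Finset.mem_insert, Finset.mem_insert, Finset.mem_singleton] at hx
    rcases hx with rfl | rfl | rfl
    exacts [hA, hB, hC]
  have hsplit : (∑ v ∈ D.verts \ S3, D.defect v) + ∑ v ∈ S3, D.defect v
      = ∑ v ∈ D.verts, D.defect v := Finset.sum_sdiff hS3sub
  have hS3sum : ∑ v ∈ S3, D.defect v = D.defect A + D.defect B + D.defect C := by
    rw [hS3, Finset.sum_insert (by simp [hAB, hAC]),
      Finset.sum_insert (by simp [hBC]), Finset.sum_singleton]
    ring
  have hrest_le : ∀ v ∈ D.verts \ S3, D.defect v ≤ 0 := by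
    intro v hv
    rw [Finset.mem_sdiff] at hv
    have hvmem := hv.1
    have hnot := hv.2
    rw [hS3, Finset.mem_insert, Finset.mem_insert, Finset.mem_singleton] at hnot
    push_neg at hnot
    by_cases hb : D.IsBoundary v
    · have h3 := hbd v hvmem hb hnot.1 hnot.2.1 hnot.2.2
      rw [CombSurface.defect, if_pos hb]
      have h3' : (3 : ℤ) ≤ (D.numTri v : ℤ) := by exact_mod_cast h3
      linarith
    · exact hsys v hvmem hb
  have hrest_sum_le : ∑ v ∈ D.verts \ S3, D.defect v ≤ 0 := Finset.sum_nonpos hrest_le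
  have hABC_le : D.defect A + D.defect B + D.defect C ≤ 6 := by linarith
  have hrest0 : ∑ v ∈ D.verts \ S3, D.defect v = 0 := by
    rw [hS3sum, GB] at hsplit
    linarith
  have heach0 : ∀ v ∈ D.verts \ S3, D.defect v = 0 := by
    have h := (Finset.sum_eq_zero_iff_of_nonpos hrest_le).1 hrest0
    exact h
  have hABC6 : D.defect A + D.defect B + D.defect C = 6 := by
    rw [hS3sum, GB] at hsplit
    linarith
  have hdA2 : D.defect A = 2 := by linarith
  have hdB2 : D.defect B = 2 := by linarith
  have hdC2 : D.defect C = 2 := by linarith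
  have hnonneg : ∀ v ∈ D.verts, 0 ≤ D.defect v := by
    intro v hv
    by_cases hvS : v ∈ S3
    · rw [hS3, Finset.mem_insert, Finset.mem_insert, Finset.mem_singleton] at hvS
      rcases hvS with rfl | rfl | rfl <;> omega
    · rw [heach0 v (Finset.mem_sdiff.2 ⟨hv, hvS⟩)]
  refine ⟨?_, ?_, ?_⟩
  · intro v hv hnb
    have hvS : v ∉ S3 := by
      intro hvS
      rw [hS3, Finset.mem_insert, Finset.mem_insert, Finset.mem_singleton] at hvS
      rcases hvS with rfl | rfl | rfl
      exacts [hnb hAbd, hnb hBbd, hnb hCbd]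
    exact heach0 v (Finset.mem_sdiff.2 ⟨hv, hvS⟩)
  · intro v hv _
    linarith [hnonneg v hv]
  · intro n g hg i m hm hmn hneg _
    exfalso
    have hgi : g i ∈ D.verts := by
      obtain ⟨-, hbd', -⟩ := hg
      obtain ⟨hc2, hc1⟩ := hbd' i
      have hne : (D.triangles.filter fun t =>
          ({g i, g (i + 1)} : Finset W) ⊆ t).Nonempty := by
        rw [← Finset.card_pos, hc1]
        norm_num
      obtain ⟨t, ht⟩ := hne
      rw [Finset.mem_filter] at ht
      exact D.mem_verts'.2 ⟨t, ht.1, ht.2 (Finset.mem_insert_self _ _)⟩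
    linarith [hnonneg (g i) hgi]

end
end
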